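/- Let P = 𝔽₂[b₁, b₂, c₃, c₄, …][ρ, x₁, x₂, v₁, v₂] be a polynomial ring over 𝔽₂, weighted-graded by assigning weight 0 to each bᵢ and cᵢ, weight −1 to ρ, x₁ and x₂, weight 1 to v₁, and weight 3 to v₂. Let J ⊆ P be the ideal generated by the homogeneous elements ρv₁, x₁v₁, x₂v₁ and x₂² + ρ²b₂ + x₁²b₁. Then every weighted-homogeneous element f ∈ P of weight ≤ 0 that lies in the ideal J + (v₁) already lies in J. Equivalently, the quotient map from P/J to P/(J + (v₁)) is injective (hence an isomorphism) on all weighted-homogeneous components of weight ≤ 0. -/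

import Mathlib

/-!
STATEMENT 10: In `P = 𝔽₂[b₁, b₂, c₃, c₄, …][ρ, x₁, x₂, v₁, v₂]`, weighted-graded with the
`bᵢ, cᵢ` of weight `0`, `ρ, x₁, x₂` of weight `−1`, `v₁` of weight `1`, `v₂` of weight `3`,
and `J = (ρv₁, x₁v₁, x₂v₁, x₂² + ρ²b₂ + x₁²b₁)`: every weighted-homogeneous `f` of weight
`≤ 0` lying in `J + (v₁)` already lies in `J`.

We model `P` with variable set `ℕ ⊕ Fin 5` (`Sum.inl 0, 1 = b₁, b₂`, `Sum.inl (k+2) =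
c_{k+3}`; `Sum.inr 0,…,4 = ρ, x₁, x₂, v₁, v₂`).
-/

open MvPolynomial

noncomputable section

namespace Stmt10

abbrev P := MvPolynomial (ℕ ⊕ Fin 5) (ZMod 2)

def b₁ : P := X (Sum.inl 0)
def b₂ : P := X (Sum.inl 1)
def c (k : ℕ) : P := X (Sum.inl (k + 2))   -- `c k` is `c_{k+3}`
def ρ : P := X (Sum.inr 0)
def x₁ : P := X (Sum.inr 1)
def x₂ : P := X (Sum.inr 2)
def v₁ : P := X (Sum.inr 3)
def v₂ : P := X (Sum.inr 4)

/-- the weights: `bᵢ, cᵢ ↦ 0`; `ρ, x₁, x₂ ↦ −1`; `v₁ ↦ 1`; `v₂ ↦ 3`. -/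
def w : ℕ ⊕ Fin 5 → ℤ := Sum.elim (fun _ => 0) ![-1, -1, -1, 1, 3]

/-- the ideal `J = (ρv₁, x₁v₁, x₂v₁, x₂² + ρ²b₂ + x₁²b₁)`. -/
def J : Ideal P := Ideal.span
  {ρ * v₁, x₁ * v₁, x₂ * v₁, x₂ ^ 2 + ρ ^ 2 * b₂ + x₁ ^ 2 * b₁}

/-- The weighted homogeneous component of a product with a weighted-homogeneous polynomial. -/
lemma component_mul_homogeneous {σ R : Type*} [CommRing R] (w : σ → ℤ)
    (a g : MvPolynomial σ R) (d n : ℤ) (hg : g.IsWeightedHomogeneous w d) :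
    weightedHomogeneousComponent w n (a * g)
      = weightedHomogeneousComponent w (n - d) a * g := by
  induction a using MvPolynomial.induction_on' with
  | monomial u r =>
    have hm : IsWeightedHomogeneous w (monomial u r) (Finsupp.weight w u) :=
      isWeightedHomogeneous_monomial w u r rfl
    by_cases h : n = Finsupp.weight w u + d
    · rw [h, (hm.mul hg).weightedHomogeneousComponent_same,
        show Finsupp.weight w u + d - d = Finsupp.weight w u by ring,
        hm.weightedHomogeneousComponent_same]
    · rw [(hm.mul hg).weightedHomogeneousComponent_ne n h,
        hm.weightedHomogeneousComponent_ne (n - d) (by omega), zero_mul]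
  | add p q hp hq => rw [add_mul, map_add, map_add, hp, hq, add_mul]

/-- A weighted-homogeneous polynomial of negative weight lies in `(ρ, x₁, x₂)`. -/
lemma neg_weight_mem (g : P) (m : ℤ) (hm : m < 0) (hg : g.IsWeightedHomogeneous w m) :
    g ∈ Ideal.span ({ρ, x₁, x₂} : Set P) := by
  rw [← g.support_sum_monomial_coeff]
  apply Ideal.sum_mem
  intro d hd
  have hw : Finsupp.weight w d = m := hg (mem_support_iff.mp hd)
  have : ∃ i ∈ ({Sum.inr 0, Sum.inr 1, Sum.inr 2} : Set (ℕ ⊕ Fin 5)), d i ≠ 0 := by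
    by_contra hc
    push_neg at hc
    have h0 : d (Sum.inr 0) = 0 := hc _ (by simp)
    have h1 : d (Sum.inr 1) = 0 := hc _ (by simp)
    have h2 : d (Sum.inr 2) = 0 := hc _ (by simp)
    have : (0 : ℤ) ≤ Finsupp.weight w d := by
      rw [Finsupp.weight_apply, Finsupp.sum]
      apply Finset.sum_nonneg
      intro i _
      rcases i with nn | j
      · simp [w]
      · fin_cases j
        · simp [h0]
        · simp [h1]
        · simp [h2]
        · have : w (Sum.inr 3) = 1 := rfl
          simp [this]
        · have : w (Sum.inr 4) = 3 := rfl
          simp [this]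
    omega
  obtain ⟨i, hi, hdi⟩ := this
  obtain ⟨q, hq⟩ : (X i : P) ∣ monomial d (coeff d g) := X_dvd_monomial.mpr (Or.inr hdi)
  rw [hq]
  refine Ideal.mul_mem_right q _ (Ideal.subset_span ?_)
  simpa [ρ, x₁, x₂] using hi

lemma mem_mul_v₁ (g : P) (hg : g ∈ Ideal.span ({ρ, x₁, x₂} : Set P)) : g * v₁ ∈ J := by
  rw [show ({ρ, x₁, x₂} : Set P) = insert ρ (insert x₁ {x₂}) from rfl,
    Ideal.mem_span_insert] at hg
  obtain ⟨a, z, hz, rfl⟩ := hg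
  rw [Ideal.mem_span_insert] at hz
  obtain ⟨b, z', hz', rfl⟩ := hz
  rw [Ideal.mem_span_singleton'] at hz'
  obtain ⟨cc, rfl⟩ := hz'
  have h1 : ρ * v₁ ∈ J := Ideal.subset_span (by simp [J])
  have h2 : x₁ * v₁ ∈ J := Ideal.subset_span (by simp [J])
  have h3 : x₂ * v₁ ∈ J := Ideal.subset_span (by simp [J])
  have : (a * ρ + (b * x₁ + cc * x₂)) * v₁
      = a * (ρ * v₁) + b * (x₁ * v₁) + cc * (x₂ * v₁) := by ring
  rw [this]
  exact Ideal.add_mem _ (Ideal.add_mem _ (Ideal.mul_mem_left _ _ h1)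
    (Ideal.mul_mem_left _ _ h2)) (Ideal.mul_mem_left _ _ h3)

lemma hw0 : w (Sum.inr 0) = -1 := rfl
lemma hw1 : w (Sum.inr 1) = -1 := rfl
lemma hw2 : w (Sum.inr 2) = -1 := rfl
lemma hw3 : w (Sum.inr 3) = 1 := rfl
lemma hw4 : w (Sum.inr 4) = 3 := rfl
lemma hwb (n : ℕ) : w (Sum.inl n) = 0 := rfl

lemma hom_ρv₁ : IsWeightedHomogeneous w (ρ * v₁) 0 := by
  have := (isWeightedHomogeneous_X (ZMod 2) w (Sum.inr 0)).mul
    (isWeightedHomogeneous_X (ZMod 2) w (Sum.inr 3))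
  rwa [hw0, hw3, show (-1 : ℤ) + 1 = 0 by ring] at this

lemma hom_x₁v₁ : IsWeightedHomogeneous w (x₁ * v₁) 0 := by
  have := (isWeightedHomogeneous_X (ZMod 2) w (Sum.inr 1)).mul
    (isWeightedHomogeneous_X (ZMod 2) w (Sum.inr 3))
  rwa [hw1, hw3, show (-1 : ℤ) + 1 = 0 by ring] at this

lemma hom_x₂v₁ : IsWeightedHomogeneous w (x₂ * v₁) 0 := by
  have := (isWeightedHomogeneous_X (ZMod 2) w (Sum.inr 2)).mul
    (isWeightedHomogeneous_X (ZMod 2) w (Sum.inr 3))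
  rwa [hw2, hw3, show (-1 : ℤ) + 1 = 0 by ring] at this

lemma hom_v₁ : IsWeightedHomogeneous w v₁ 1 := by
  have := isWeightedHomogeneous_X (ZMod 2) w (Sum.inr 3)
  rwa [hw3] at this

lemma hom_q : IsWeightedHomogeneous w (x₂ ^ 2 + ρ ^ 2 * b₂ + x₁ ^ 2 * b₁) (-2) := by
  have hx₂ : IsWeightedHomogeneous w (x₂ ^ 2) (-2) := by
    have := ((isWeightedHomogeneous_X (ZMod 2) w (Sum.inr 2)).mul
      (isWeightedHomogeneous_X (ZMod 2) w (Sum.inr 2)))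
    rw [hw2, show (-1 : ℤ) + -1 = -2 by ring] at this
    rwa [sq]
  have hρ : IsWeightedHomogeneous w (ρ ^ 2 * b₂) (-2) := by
    have := (((isWeightedHomogeneous_X (ZMod 2) w (Sum.inr 0)).mul
      (isWeightedHomogeneous_X (ZMod 2) w (Sum.inr 0))).mul
      (isWeightedHomogeneous_X (ZMod 2) w (Sum.inl 1)))
    rw [hw0, hwb, show (-1 : ℤ) + -1 + 0 = -2 by ring] at this
    rwa [sq]
  have hx₁ : IsWeightedHomogeneous w (x₁ ^ 2 * b₁) (-2) := by
    have := (((isWeightedHomogeneous_X (ZMod 2) w (Sum.inr 1)).mul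
      (isWeightedHomogeneous_X (ZMod 2) w (Sum.inr 1))).mul
      (isWeightedHomogeneous_X (ZMod 2) w (Sum.inl 0)))
    rw [hw1, hwb, show (-1 : ℤ) + -1 + 0 = -2 by ring] at this
    rwa [sq]
  exact (hx₂.add hρ).add hx₁

theorem stmt_10 :
    ∀ (f : P) (k : ℤ), k ≤ 0 → MvPolynomial.IsWeightedHomogeneous w f k →
      f ∈ J ⊔ Ideal.span {v₁} → f ∈ J := by
  intro f k hk hf hmem
  rw [J, ← Ideal.span_union] at hmem
  rw [show ({ρ * v₁, x₁ * v₁, x₂ * v₁, x₂ ^ 2 + ρ ^ 2 * b₂ + x₁ ^ 2 * b₁} : Set P) ∪ {v₁}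
      = insert (ρ * v₁) (insert (x₁ * v₁) (insert (x₂ * v₁)
        (insert (x₂ ^ 2 + ρ ^ 2 * b₂ + x₁ ^ 2 * b₁) {v₁}))) by
    ext p
    simp only [Set.mem_union, Set.mem_insert_iff, Set.mem_singleton_iff]
    tauto] at hmem
  rw [Ideal.mem_span_insert] at hmem
  obtain ⟨a₁, z, hz, rfl⟩ := hmem
  rw [Ideal.mem_span_insert] at hz
  obtain ⟨a₂, z, hz, rfl⟩ := hz
  rw [Ideal.mem_span_insert] at hz
  obtain ⟨a₃, z, hz, rfl⟩ := hz
  rw [Ideal.mem_span_insert] at hz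
  obtain ⟨a₄, z, hz, rfl⟩ := hz
  rw [Ideal.mem_span_singleton'] at hz
  obtain ⟨a₅, rfl⟩ := hz
  rw [← hf.weightedHomogeneousComponent_same]
  simp only [map_add]
  rw [component_mul_homogeneous w a₁ _ 0 k hom_ρv₁,
    component_mul_homogeneous w a₂ _ 0 k hom_x₁v₁,
    component_mul_homogeneous w a₃ _ 0 k hom_x₂v₁,
    component_mul_homogeneous w a₄ _ (-2) k hom_q,
    component_mul_homogeneous w a₅ _ 1 k hom_v₁]
  have h1 : ρ * v₁ ∈ J := Ideal.subset_span (by simp [J])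
  have h2 : x₁ * v₁ ∈ J := Ideal.subset_span (by simp [J])
  have h3 : x₂ * v₁ ∈ J := Ideal.subset_span (by simp [J])
  have h4 : x₂ ^ 2 + ρ ^ 2 * b₂ + x₁ ^ 2 * b₁ ∈ J := Ideal.subset_span (by simp [J])
  have h5 : weightedHomogeneousComponent w (k - 1) a₅ * v₁ ∈ J := by
    apply mem_mul_v₁
    exact neg_weight_mem _ (k - 1) (by omega)
      (weightedHomogeneousComponent_isWeightedHomogeneous (k - 1) a₅)
  exact Ideal.add_mem _ (Ideal.mul_mem_left _ _ h1)
    (Ideal.add_mem _ (Ideal.mul_mem_left _ _ h2)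
      (Ideal.add_mem _ (Ideal.mul_mem_left _ _ h3)
        (Ideal.add_mem _ (Ideal.mul_mem_left _ _ h4) h5)))

end Stmt10

end
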